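/- arXiv:1203.1714 — 2 statements merged into one kernel-verified Lean document; each statement's English description precedes it below -/
import Mathlib

section
/- Let x̄ ∈ ℝⁿ (n = N·D) be a block-sparse signal with block support T ⊆ {1,…,N} (i.e., x̄ₖ = 0 for every block index k ∉ T), let A ∈ ℝ^{m×n} have full row rank, and let α > 0 satisfy 1/α < ‖x̄ₖ‖ for every k ∈ T. Set d = min_{k∈T} min(1/α, ‖x̄ₖ‖ − 1/α), let y = A x̄ + v for some noise vector v ∈ ℝ^m, and let L = {x ∈ ℝⁿ : A x = y}. Suppose A_T has full column rank. If x̂ minimizes J(x) = Σ_{k=1}^{N} F_α(‖xₖ‖) over the region L ∩ B(x̄, d), then ‖x̂ − x̄‖ ≤ 2√N (1 + ‖A_T† A_{T^c}‖) ‖A† v‖ + ‖A_T† v‖, where ‖A_T† A_{T^c}‖ denotes the ℓ₂ operator norm. -/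
open scoped BigOperators
open Matrix

noncomputable section

/-- The Euclidean (`ℓ₂`) norm of a finitely-indexed real vector. -/
def l2norm {ι : Type*} [Fintype ι] (x : ι → ℝ) : ℝ :=
  Real.sqrt (∑ i, (x i) ^ 2)

/-- The `ℓ₂` operator norm of a real matrix. -/
def l2opNorm {ι κ : Type*} [Fintype ι] [Fintype κ] [DecidableEq κ] (M : Matrix ι κ ℝ) : ℝ :=
  ‖LinearMap.toContinuousLinearMap (Matrix.toEuclideanLin M)‖

/-- The approximation `F_α` to the indicator of nonzeroness. -/
def Fa (α w : ℝ) : ℝ :=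
  if |w| ≤ 1 / α then 2 * α * |w| - α ^ 2 * w ^ 2 else 1

/-- The `k`-th block (of length `D`) of a block vector. -/
def blk {N D : ℕ} (x : Fin N × Fin D → ℝ) (k : Fin N) : Fin D → ℝ :=
  fun j => x (k, j)

/-- The cost function `J(x) = ∑ₖ F_α(‖xₖ‖)`. -/
def J {N D : ℕ} (α : ℝ) (x : Fin N × Fin D → ℝ) : ℝ :=
  ∑ k, Fa α (l2norm (blk x k))

/-- Pseudo-inverse `A† = Aᵀ (A Aᵀ)⁻¹` of a full-row-rank matrix. -/
def pinvR {ι κ : Type*} [Fintype ι] [Fintype κ] [DecidableEq ι] (A : Matrix ι κ ℝ) :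
    Matrix κ ι ℝ :=
  Aᵀ * (A * Aᵀ)⁻¹

/-- Pseudo-inverse `A† = (Aᵀ A)⁻¹ Aᵀ` of a full-column-rank matrix. -/
def pinvC {ι κ : Type*} [Fintype ι] [Fintype κ] [DecidableEq κ] (A : Matrix ι κ ℝ) :
    Matrix κ ι ℝ :=
  (Aᵀ * A)⁻¹ * Aᵀ

/-- The submatrix `A_T` formed by the column blocks of `A` indexed by `T`. -/
def subCols {ι : Type*} {N D : ℕ} (A : Matrix ι (Fin N × Fin D) ℝ) (T : Finset (Fin N)) :
    Matrix ι (↥T × Fin D) ℝ :=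
  A.submatrix id (fun p => ((p.1 : Fin N), p.2))

/-- The subvector `x_T` formed by the blocks of `x` indexed by `T`. -/
def subVec {N D : ℕ} (x : Fin N × Fin D → ℝ) (T : Finset (Fin N)) : ↥T × Fin D → ℝ :=
  fun p => x ((p.1 : Fin N), p.2)

lemma l2norm_eq_norm {ι : Type*} [Fintype ι] (x : ι → ℝ) :
    l2norm x = ‖(WithLp.equiv 2 (ι → ℝ)).symm x‖ := by
  rw [EuclideanSpace.norm_eq]
  simp [l2norm, Real.norm_eq_abs, sq_abs]

lemma l2norm_nonneg {ι : Type*} [Fintype ι] (x : ι → ℝ) : 0 ≤ l2norm x :=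
  Real.sqrt_nonneg _

lemma sq_l2norm {ι : Type*} [Fintype ι] (x : ι → ℝ) : l2norm x ^ 2 = ∑ i, (x i) ^ 2 :=
  Real.sq_sqrt (Finset.sum_nonneg fun i _ => sq_nonneg _)

lemma l2norm_eq_zero {ι : Type*} [Fintype ι] {x : ι → ℝ} (h : l2norm x = 0) : x = 0 := by
  rw [l2norm_eq_norm] at h
  have := norm_eq_zero.mp h
  ext i
  exact congrFun (congrArg (WithLp.equiv 2 (ι → ℝ)) this) i

lemma l2norm_add_le {ι : Type*} [Fintype ι] (x y : ι → ℝ) :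
    l2norm (x + y) ≤ l2norm x + l2norm y := by
  rw [l2norm_eq_norm, l2norm_eq_norm, l2norm_eq_norm, WithLp.equiv_symm_apply, WithLp.toLp_add]
  exact norm_add_le _ _

lemma l2opNorm_nonneg {ι κ : Type*} [Fintype ι] [Fintype κ] [DecidableEq κ]
    (M : Matrix ι κ ℝ) : 0 ≤ l2opNorm M := norm_nonneg _

lemma l2opNorm_mulVec {ι κ : Type*} [Fintype ι] [Fintype κ] [DecidableEq κ]
    (M : Matrix ι κ ℝ) (x : κ → ℝ) : l2norm (M *ᵥ x) ≤ l2opNorm M * l2norm x := by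
  rw [l2norm_eq_norm, l2norm_eq_norm, WithLp.equiv_symm_apply,
    ← Matrix.toEuclideanLin_apply_piLp_toLp]
  exact (LinearMap.toContinuousLinearMap (Matrix.toEuclideanLin M)).le_opNorm _

lemma isUnit_of_rank_eq_card {κ : Type*} [Fintype κ] [DecidableEq κ]
    (C : Matrix κ κ ℝ) (h : C.rank = Fintype.card κ) : IsUnit C := by
  rw [← Matrix.mulVec_surjective_iff_isUnit]
  have hrange : LinearMap.range C.mulVecLin = ⊤ := by
    apply Submodule.eq_top_of_finrank_eq
    rw [Module.finrank_fintype_fun_eq_card]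
    exact h
  intro y
  have : y ∈ LinearMap.range C.mulVecLin := hrange ▸ Submodule.mem_top
  obtain ⟨x, hx⟩ := this
  exact ⟨x, hx⟩

lemma mulVec_pinvR {ι κ : Type*} [Fintype ι] [Fintype κ] [DecidableEq ι]
    (A : Matrix ι κ ℝ) (h : A.rank = Fintype.card ι) (v : ι → ℝ) :
    A *ᵥ (pinvR A *ᵥ v) = v := by
  have hu : IsUnit (A * Aᵀ) :=
    isUnit_of_rank_eq_card _ (by rw [Matrix.rank_self_mul_transpose]; exact h)
  rw [Matrix.mulVec_mulVec, pinvR, ← Matrix.mul_assoc,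
    Matrix.mul_nonsing_inv _ ((Matrix.isUnit_iff_isUnit_det _).mp hu), Matrix.one_mulVec]

lemma pinvC_mulVec {ι κ : Type*} [Fintype ι] [Fintype κ] [DecidableEq κ]
    (B : Matrix ι κ ℝ) (h : B.rank = Fintype.card κ) (w : κ → ℝ) :
    pinvC B *ᵥ (B *ᵥ w) = w := by
  have hu : IsUnit (Bᵀ * B) :=
    isUnit_of_rank_eq_card _ (by rw [Matrix.rank_transpose_mul_self]; exact h)
  rw [Matrix.mulVec_mulVec, pinvC, Matrix.mul_assoc,
    Matrix.nonsing_inv_mul _ ((Matrix.isUnit_iff_isUnit_det _).mp hu), Matrix.one_mulVec]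

lemma Fa_le_one {α : ℝ} (hα : 0 < α) (w : ℝ) : Fa α w ≤ 1 := by
  unfold Fa
  split_ifs with h
  · nlinarith [sq_abs w, sq_nonneg (α * |w| - 1)]
  · exact le_rfl

lemma Fa_nonneg {α : ℝ} (hα : 0 < α) (w : ℝ) : 0 ≤ Fa α w := by
  unfold Fa
  split_ifs with h
  · have h0 : 0 ≤ |w| := abs_nonneg w
    have h1 : α * |w| ≤ 1 := by
      have := (le_div_iff₀ hα).mp h
      linarith
    have key : 0 ≤ α * |w| * (2 - α * |w|) :=
      mul_nonneg (mul_nonneg hα.le h0) (by linarith)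
    nlinarith [sq_abs w]
  · norm_num

lemma Fa_eq_one {α w : ℝ} (hα : 0 < α) (h0 : 0 ≤ w) (h : 1 / α ≤ w) : Fa α w = 1 := by
  unfold Fa
  rw [abs_of_nonneg h0]
  split_ifs with hw
  · have : w = 1 / α := le_antisymm hw h
    subst this
    field_simp
    norm_num
  · rfl

lemma Fa_ge_lin {α w : ℝ} (hα : 0 < α) (h0 : 0 ≤ w) (hw : w ≤ 1 / α) :
    α * w ≤ Fa α w := by
  unfold Fa
  rw [abs_of_nonneg h0, if_pos hw]
  have h1 : α * w ≤ 1 := by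
    have := (le_div_iff₀ hα).mp hw
    linarith
  have key : 0 ≤ α * w * (1 - α * w) :=
    mul_nonneg (mul_nonneg hα.le h0) (by linarith)
  nlinarith

lemma Fa_le_lin {α w : ℝ} (hα : 0 < α) (h0 : 0 ≤ w) : Fa α w ≤ 2 * α * w := by
  unfold Fa
  rw [abs_of_nonneg h0]
  split_ifs with hw
  · nlinarith
  · push_neg at hw
    rw [div_lt_iff₀ hα] at hw
    nlinarith

lemma sum_sq_blocks {N D : ℕ} (x : Fin N × Fin D → ℝ) :
    ∑ p, (x p) ^ 2 = ∑ k, (l2norm (blk x k)) ^ 2 := by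
  rw [Fintype.sum_prod_type]
  exact Finset.sum_congr rfl fun k _ => (sq_l2norm (blk x k)).symm

lemma sq_l2norm_subVec {N D : ℕ} (x : Fin N × Fin D → ℝ) (S : Finset (Fin N)) :
    (l2norm (subVec x S)) ^ 2 = ∑ k ∈ S, (l2norm (blk x k)) ^ 2 := by
  rw [sq_l2norm, Fintype.sum_prod_type]
  rw [show (∑ a : ↥S, ∑ j, (subVec x S (a, j)) ^ 2)
      = ∑ a : ↥S, ∑ j, (x ((a : Fin N), j)) ^ 2 from rfl,
    Finset.sum_coe_sort S (fun k => ∑ j, (x (k, j)) ^ 2)]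
  exact Finset.sum_congr rfl fun k _ => (sq_l2norm (blk x k)).symm

lemma l2norm_blk_le {N D : ℕ} (x : Fin N × Fin D → ℝ) (k : Fin N) :
    l2norm (blk x k) ≤ l2norm x := by
  unfold l2norm
  apply Real.sqrt_le_sqrt
  rw [Fintype.sum_prod_type]
  exact Finset.single_le_sum (f := fun k => ∑ j, (x (k, j)) ^ 2)
    (fun i _ => Finset.sum_nonneg fun j _ => sq_nonneg _) (Finset.mem_univ k)

lemma mulVec_split {ι : Type*} [Fintype ι] {N D : ℕ}
    (A : Matrix ι (Fin N × Fin D) ℝ) (T : Finset (Fin N)) (x : Fin N × Fin D → ℝ) :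
    A *ᵥ x = subCols A T *ᵥ subVec x T + subCols A Tᶜ *ᵥ subVec x Tᶜ := by
  funext i
  simp only [Matrix.mulVec, dotProduct, Pi.add_apply, subCols, subVec,
    Matrix.submatrix_apply, id]
  rw [Fintype.sum_prod_type, Fintype.sum_prod_type, Fintype.sum_prod_type,
    Finset.sum_coe_sort T (fun k => ∑ j, A i (k, j) * x (k, j)),
    Finset.sum_coe_sort Tᶜ (fun k => ∑ j, A i (k, j) * x (k, j)),
    Finset.sum_add_sum_compl]

lemma l2norm_neg {ι : Type*} [Fintype ι] (x : ι → ℝ) : l2norm (-x) = l2norm x := by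
  simp [l2norm, neg_sq]

lemma le_of_sq_le_sq' {a b : ℝ} (h : a ^ 2 ≤ b ^ 2) (ha : 0 ≤ a) (hb : 0 ≤ b) : a ≤ b := by
  nlinarith

set_option maxHeartbeats 2000000 in
/-- **Theorem 1 (stability of the local minimum of the BZAP cost function).**
If `x̂` minimizes `J` over `L ∩ B(x̄, d)`, then
`‖x̂ − x̄‖ ≤ 2√N (1 + ‖A_T† A_{Tᶜ}‖) ‖A† v‖ + ‖A_T† v‖`. -/
theorem bzap_stability {m N D : ℕ} (A : Matrix (Fin m) (Fin N × Fin D) ℝ)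
    (xbar xhat : Fin N × Fin D → ℝ) (v : Fin m → ℝ) (T : Finset (Fin N)) (hT : T.Nonempty)
    (α : ℝ) (hα : 0 < α)
    (hsupp : ∀ k ∉ T, blk xbar k = 0)
    (hrow : A.rank = m)
    (hcol : (subCols A T).rank = Fintype.card (↥T × Fin D))
    (halpha : ∀ k ∈ T, 1 / α < l2norm (blk xbar k))
    (d : ℝ) (hd : d = T.inf' hT fun k => min (1 / α) (l2norm (blk xbar k) - 1 / α))
    (hfeas : A *ᵥ xhat = A *ᵥ xbar + v)
    (hball : l2norm (xhat - xbar) ≤ d)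
    (hmin : ∀ x : Fin N × Fin D → ℝ, A *ᵥ x = A *ᵥ xbar + v → l2norm (x - xbar) ≤ d →
      J α xhat ≤ J α x) :
    l2norm (xhat - xbar) ≤
      2 * Real.sqrt N * (1 + l2opNorm (pinvC (subCols A T) * subCols A Tᶜ)) *
        l2norm (pinvR A *ᵥ v) + l2norm (pinvC (subCols A T) *ᵥ v) := by
  obtain ⟨k0, hk0⟩ := hT
  set w : Fin N × Fin D → ℝ := pinvR A *ᵥ v with hw
  set ρ : ℝ := l2norm w with hρdef
  set σ : ℝ := l2norm (pinvC (subCols A T) *ᵥ v) with hσdef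
  set c : ℝ := l2opNorm (pinvC (subCols A T) * subCols A Tᶜ) with hcdef
  clear_value ρ σ c
  have hρ0 : 0 ≤ ρ := by rw [hρdef]; exact l2norm_nonneg _
  have hσ0 : 0 ≤ σ := by rw [hσdef]; exact l2norm_nonneg _
  have hc0 : 0 ≤ c := by rw [hcdef]; exact l2opNorm_nonneg _
  have hN1 : (1 : ℝ) ≤ Real.sqrt N := by
    have hN : (1 : ℝ) ≤ (N : ℝ) := by exact_mod_cast k0.pos
    have := Real.sqrt_le_sqrt hN
    rwa [Real.sqrt_one] at this
  have hsN : 0 ≤ Real.sqrt N := Real.sqrt_nonneg _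
  -- trivial case: `ρ > d`
  by_cases hcase : ρ ≤ d
  swap
  · push_neg at hcase
    have h2 : (1:ℝ) ≤ 2 * Real.sqrt N * (1 + c) := by
      nlinarith [mul_nonneg hsN hc0]
    have h1 : ρ * 1 ≤ ρ * (2 * Real.sqrt N * (1 + c)) :=
      mul_le_mul_of_nonneg_left h2 hρ0
    nlinarith
  -- main case
  have hdk : ∀ k ∈ T, d ≤ min (1 / α) (l2norm (blk xbar k) - 1 / α) := by
    intro k hk
    rw [hd]
    exact Finset.inf'_le _ hk
  have hd1 : d ≤ 1 / α := le_trans (hdk k0 hk0) (min_le_left _ _)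
  -- blocks of xhat on the support are big
  have hub : ∀ k, l2norm (blk (xhat - xbar) k) ≤ d :=
    fun k => le_trans (l2norm_blk_le _ k) hball
  have hbigT : ∀ k ∈ T, Fa α (l2norm (blk xhat k)) = 1 := by
    intro k hk
    have hdec : blk xbar k = blk xhat k + (-(blk (xhat - xbar) k)) := by
      funext j
      simp [blk]
    have htri : l2norm (blk xbar k) ≤ l2norm (blk xhat k) + l2norm (blk (xhat - xbar) k) := by
      rw [hdec]
      calc l2norm (blk xhat k + -(blk (xhat - xbar) k))
          ≤ l2norm (blk xhat k) + l2norm (-(blk (xhat - xbar) k)) := l2norm_add_le _ _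
        _ = l2norm (blk xhat k) + l2norm (blk (xhat - xbar) k) := by rw [l2norm_neg]
    have hk2 : d ≤ l2norm (blk xbar k) - 1 / α := le_trans (hdk k hk) (min_le_right _ _)
    have : 1 / α ≤ l2norm (blk xhat k) := by
      have := hub k
      linarith
    exact Fa_eq_one hα (l2norm_nonneg _) this
  -- blocks off the support
  have hblkoff : ∀ k ∈ Tᶜ, blk (xhat - xbar) k = blk xhat k := by
    intro k hk
    funext j
    have h0 : xbar (k, j) = 0 := congrFun (hsupp k (Finset.mem_compl.mp hk)) j
    simp [blk, h0]
  -- the competitor `xbar + w`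
  have hA : A.rank = Fintype.card (Fin m) := by rwa [Fintype.card_fin]
  have hx'feas : A *ᵥ (xbar + w) = A *ᵥ xbar + v := by
    rw [Matrix.mulVec_add, hw, mulVec_pinvR A hA v]
  have hx'ball : l2norm (xbar + w - xbar) ≤ d := by
    rw [add_sub_cancel_left, ← hρdef]
    exact hcase
  have hJ := hmin (xbar + w) hx'feas hx'ball
  -- split the cost sums
  have hsplit : ∀ x : Fin N × Fin D → ℝ, J α x =
      (∑ k ∈ T, Fa α (l2norm (blk x k))) + ∑ k ∈ Tᶜ, Fa α (l2norm (blk x k)) :=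
    fun x => (Finset.sum_add_sum_compl T _).symm
  set S1 : ℝ := ∑ k ∈ Tᶜ, l2norm (blk xhat k) with hS1
  set S2 : ℝ := ∑ k ∈ Tᶜ, l2norm (blk w k) with hS2
  clear_value S1 S2
  have hJhat : J α xhat = T.card + ∑ k ∈ Tᶜ, Fa α (l2norm (blk xhat k)) := by
    rw [hsplit, Finset.sum_congr rfl hbigT, Finset.sum_const, nsmul_eq_mul, mul_one]
  have hJx'T : (∑ k ∈ T, Fa α (l2norm (blk (xbar + w) k))) ≤ T.card := by
    calc (∑ k ∈ T, Fa α (l2norm (blk (xbar + w) k))) ≤ ∑ k ∈ T, 1 :=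
        Finset.sum_le_sum fun k _ => Fa_le_one hα _
      _ = T.card := by rw [Finset.sum_const, nsmul_eq_mul, mul_one]
  have hJx'Tc : (∑ k ∈ Tᶜ, Fa α (l2norm (blk (xbar + w) k))) ≤ 2 * α * S2 := by
    rw [hS2, Finset.mul_sum]
    apply Finset.sum_le_sum
    intro k hk
    have hbw : blk (xbar + w) k = blk w k := by
      funext j
      have h0 : xbar (k, j) = 0 := congrFun (hsupp k (Finset.mem_compl.mp hk)) j
      simp [blk, h0]
    rw [hbw]
    exact Fa_le_lin hα (l2norm_nonneg _)
  have hJhatTc : α * S1 ≤ ∑ k ∈ Tᶜ, Fa α (l2norm (blk xhat k)) := by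
    rw [hS1, Finset.mul_sum]
    apply Finset.sum_le_sum
    intro k hk
    rw [← hblkoff k hk]
    exact Fa_ge_lin hα (l2norm_nonneg _) (le_trans (hub k) hd1)
  -- conclude S1 ≤ 2 S2
  have hS12 : S1 ≤ 2 * S2 := by
    have h1 : α * S1 ≤ 2 * α * S2 := by
      have := hJ
      rw [hJhat, hsplit (xbar + w)] at this
      linarith
    nlinarith
  -- Cauchy–Schwarz : S2 ≤ √N * ρ
  have hS2le : S2 ≤ Real.sqrt N * ρ := by
    have h1 : S2 ^ 2 ≤ (Tᶜ.card : ℝ) * ∑ k ∈ Tᶜ, (l2norm (blk w k)) ^ 2 := by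
      rw [hS2]
      exact sq_sum_le_card_mul_sum_sq
    have h2 : (∑ k ∈ Tᶜ, (l2norm (blk w k)) ^ 2) ≤ ∑ k, (l2norm (blk w k)) ^ 2 :=
      Finset.sum_le_sum_of_subset_of_nonneg (Finset.subset_univ _)
        (fun k _ _ => sq_nonneg _)
    have h3 : (∑ k, (l2norm (blk w k)) ^ 2) = ρ ^ 2 := by
      rw [hρdef, sq_l2norm, sum_sq_blocks]
    have h4 : (Tᶜ.card : ℝ) ≤ (N : ℝ) := by
      exact_mod_cast le_trans (Finset.card_le_univ _) (le_of_eq (Fintype.card_fin N))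
    have hS20 : 0 ≤ S2 := by
      rw [hS2]; exact Finset.sum_nonneg fun k _ => l2norm_nonneg _
    have h5 : S2 ^ 2 ≤ (N : ℝ) * ρ ^ 2 := by nlinarith [sq_nonneg ρ]
    have h6 : (Real.sqrt N * ρ) ^ 2 = (N : ℝ) * ρ ^ 2 := by
      rw [mul_pow, Real.sq_sqrt (Nat.cast_nonneg N)]
    exact le_of_sq_le_sq' (by linarith) hS20 (mul_nonneg hsN hρ0)
  -- the off-support part of xhat - xbar
  set t : ℝ := l2norm (subVec (xhat - xbar) Tᶜ) with ht
  clear_value t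
  have ht0 : 0 ≤ t := by rw [ht]; exact l2norm_nonneg _
  have htS1 : t ≤ S1 := by
    have h1 : t ^ 2 = ∑ k ∈ Tᶜ, (l2norm (blk (xhat - xbar) k)) ^ 2 := by
      rw [ht]; exact sq_l2norm_subVec _ _
    have h2 : (∑ k ∈ Tᶜ, (l2norm (blk (xhat - xbar) k)) ^ 2)
        = ∑ k ∈ Tᶜ, (l2norm (blk xhat k)) ^ 2 :=
      Finset.sum_congr rfl fun k hk => by rw [hblkoff k hk]
    have h3 : (∑ k ∈ Tᶜ, (l2norm (blk xhat k)) ^ 2) ≤ S1 ^ 2 := by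
      rw [hS1]; exact Finset.sum_sq_le_sq_sum_of_nonneg fun k _ => l2norm_nonneg _
    have hS10 : 0 ≤ S1 := by
      rw [hS1]; exact Finset.sum_nonneg fun k _ => l2norm_nonneg _
    exact le_of_sq_le_sq' (by linarith) ht0 hS10
  -- the on-support part via the pseudo-inverse
  have hUfeas : A *ᵥ (xhat - xbar) = v := by
    rw [Matrix.mulVec_sub, hfeas]
    abel
  have hsplitU := mulVec_split A T (xhat - xbar)
  rw [hUfeas] at hsplitU
  have hUT : subVec (xhat - xbar) T = pinvC (subCols A T) *ᵥ v
      - (pinvC (subCols A T) * subCols A Tᶜ) *ᵥ subVec (xhat - xbar) Tᶜ := by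
    have := congrArg (fun z => pinvC (subCols A T) *ᵥ z) hsplitU.symm
    simp only [Matrix.mulVec_add] at this
    rw [pinvC_mulVec _ hcol, Matrix.mulVec_mulVec] at this
    rw [← this]
    abel
  set s : ℝ := l2norm (subVec (xhat - xbar) T) with hs
  clear_value s
  have hsle : s ≤ σ + c * t := by
    rw [hs, hUT, sub_eq_add_neg]
    calc l2norm (pinvC (subCols A T) *ᵥ v
          + -((pinvC (subCols A T) * subCols A Tᶜ) *ᵥ subVec (xhat - xbar) Tᶜ))
        ≤ l2norm (pinvC (subCols A T) *ᵥ v)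
          + l2norm (-((pinvC (subCols A T) * subCols A Tᶜ) *ᵥ subVec (xhat - xbar) Tᶜ)) :=
          l2norm_add_le _ _
      _ = σ + l2norm ((pinvC (subCols A T) * subCols A Tᶜ) *ᵥ subVec (xhat - xbar) Tᶜ) := by
          rw [l2norm_neg, ← hσdef]
      _ ≤ σ + c * t := by
          have h9 := l2opNorm_mulVec (pinvC (subCols A T) * subCols A Tᶜ)
            (subVec (xhat - xbar) Tᶜ)
          rw [← hcdef, ← ht] at h9
          linarith
  -- combine
  have hcomb : l2norm (xhat - xbar) ≤ s + t := by
    have h1 : (l2norm (xhat - xbar)) ^ 2 = s ^ 2 + t ^ 2 := by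
      rw [hs, ht, sq_l2norm_subVec, sq_l2norm_subVec, sq_l2norm, sum_sq_blocks,
        Finset.sum_add_sum_compl]
    have hs0 : 0 ≤ s := by rw [hs]; exact l2norm_nonneg _
    have h2 : (l2norm (xhat - xbar)) ^ 2 ≤ (s + t) ^ 2 := by
      rw [h1]
      nlinarith [mul_nonneg hs0 ht0]
    exact le_of_sq_le_sq' h2 (l2norm_nonneg _) (by linarith)
  have hfin : t ≤ 2 * Real.sqrt N * ρ := by linarith
  calc l2norm (xhat - xbar) ≤ s + t := hcomb
    _ ≤ σ + c * t + t := by linarith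
    _ = σ + (1 + c) * t := by ring
    _ ≤ σ + (1 + c) * (2 * Real.sqrt N * ρ) := by
        have h := mul_le_mul_of_nonneg_left hfin (by linarith : (0:ℝ) ≤ 1 + c)
        linarith
    _ = 2 * Real.sqrt N * (1 + c) * ρ + σ := by ring
end
end

section
/- Let x̄ ∈ ℝⁿ (n = N·D) be a block-sparse signal with block support T (x̄ₖ = 0 for k ∉ T) and let α > 0 satisfy 1/α < ‖x̄ₖ‖ for all k ∈ T. Set d = min_{k∈T} min(1/α, ‖x̄ₖ‖ − 1/α). Then for every x ∈ B(x̄, d), the cost function satisfies J(x) = |T| + Σ_{k∈T^c} F_α(‖xₖ‖), where |T| is the number of blocks in T. -/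
open scoped BigOperators
open Matrix

noncomputable section

lemma l2norm_sub_le {ι : Type*} [Fintype ι] (a b : ι → ℝ) :
    l2norm a - l2norm b ≤ l2norm (a - b) := by
  rw [l2norm_eq_norm, l2norm_eq_norm, l2norm_eq_norm]
  have : (WithLp.equiv 2 (ι → ℝ)).symm (a - b)
      = (WithLp.equiv 2 (ι → ℝ)).symm a - (WithLp.equiv 2 (ι → ℝ)).symm b := rfl
  rw [this]
  exact norm_sub_norm_le _ _

lemma Fa_of_ge (α w : ℝ) (hα : 0 < α) (hw : 1 / α ≤ w) : Fa α w = 1 := by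
  have hw0 : 0 ≤ w := le_trans (by positivity) hw
  unfold Fa
  split_ifs with h
  · have : w = 1 / α := le_antisymm (by rwa [abs_of_nonneg hw0] at h) hw
    subst this
    rw [abs_of_nonneg hw0]
    field_simp
    norm_num
  · rfl

/-- In the ball `B(x̄, d)` the cost function reduces to
`J(x) = |T| + ∑_{k ∈ Tᶜ} F_α(‖xₖ‖)`. -/
theorem cost_in_ball {N D : ℕ} (xbar : Fin N × Fin D → ℝ)
    (T : Finset (Fin N)) (hT : T.Nonempty) (α : ℝ) (hα : 0 < α)
    (hsupp : ∀ k ∉ T, blk xbar k = 0)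
    (halpha : ∀ k ∈ T, 1 / α < l2norm (blk xbar k))
    (d : ℝ) (hd : d = T.inf' hT fun k => min (1 / α) (l2norm (blk xbar k) - 1 / α))
    (x : Fin N × Fin D → ℝ) (hx : l2norm (x - xbar) ≤ d) :
    J α x = T.card + ∑ k ∈ Tᶜ, Fa α (l2norm (blk x k)) := by
  have hkey : ∀ k ∈ T, Fa α (l2norm (blk x k)) = 1 := by
    intro k hk
    apply Fa_of_ge _ _ hα
    have hdle : d ≤ l2norm (blk xbar k) - 1 / α := by
      rw [hd]
      exact le_trans (Finset.inf'_le _ hk) (min_le_right _ _)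
    have h1 : l2norm (blk xbar k) - l2norm (blk x k) ≤ l2norm (blk xbar k - blk x k) :=
      l2norm_sub_le _ _
    have h2 : blk xbar k - blk x k = blk (xbar - x) k := rfl
    have h3 : l2norm (blk (xbar - x) k) ≤ l2norm (xbar - x) := l2norm_blk_le _ _
    have h4 : l2norm (xbar - x) = l2norm (x - xbar) := by
      unfold l2norm
      congr 1
      apply Finset.sum_congr rfl
      intro i _
      simp only [Pi.sub_apply]
      ring
    rw [h2] at h1
    linarith [le_trans h1 (le_trans h3 (h4 ▸ hx))]
  unfold _root_.J
  rw [← Finset.sum_add_sum_compl T]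
  rw [Finset.sum_congr rfl hkey]
  simp
end
end
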